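/- There are no integers M, N, not both zero, such that (7 + 4√3)^M = (4 + √15)^N. -/

import Mathlib

open Real

private lemma key_zpow {d : ℤ} (hd : 0 ≤ d) (u : (ℤ√d)ˣ) (M : ℤ) :
    (Zsqrtd.toReal hd (u : ℤ√d)) ^ M = Zsqrtd.toReal hd ((u ^ M : (ℤ√d)ˣ) : ℤ√d) := by
  have h1 : (Zsqrtd.toReal hd (u : ℤ√d))
      = ((Units.map (Zsqrtd.toReal hd).toMonoidHom u : ℝˣ) : ℝ) := rfl
  rw [h1, ← Units.val_zpow_eq_zpow_val, ← map_zpow, Units.coe_map]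
  rfl

private lemma unit_im_zero {d : ℤ} (u : (ℤ√d)ˣ) (h : (u : ℤ√d).im = 0) :
    (u : ℤ√d).re = 1 ∨ (u : ℤ√d).re = -1 := by
  have hmul : (u : ℤ√d) * (u⁻¹ : (ℤ√d)ˣ) = 1 := u.mul_inv
  have hre : (u : ℤ√d).re * ((u⁻¹ : (ℤ√d)ˣ) : ℤ√d).re
      + d * (u : ℤ√d).im * ((u⁻¹ : (ℤ√d)ˣ) : ℤ√d).im = 1 := by
    have h := congrArg Zsqrtd.re hmul
    rw [Zsqrtd.re_mul] at h
    simpa using h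
  rw [h] at hre
  simp at hre
  exact Int.isUnit_iff.mp (IsUnit.of_mul_eq_one _ hre)

/-- There are no integers `M`, `N`, not both zero, such that
`(7 + 4√3)^M = (4 + √15)^N`. -/
theorem stmt_2 :
    ¬ ∃ M N : ℤ, (M ≠ 0 ∨ N ≠ 0) ∧
      (7 + 4 * Real.sqrt 3) ^ M = (4 + Real.sqrt 15) ^ N := by
  rintro ⟨M, N, hMN, heq⟩
  have h3 : (0:ℤ) ≤ 3 := by norm_num
  have h15 : (0:ℤ) ≤ 15 := by norm_num
  set u3 : (ℤ√3)ˣ := ⟨⟨7,4⟩, ⟨7,-4⟩, by decide, by decide⟩ with hu3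
  set u15 : (ℤ√15)ˣ := ⟨⟨4,1⟩, ⟨4,-1⟩, by decide, by decide⟩ with hu15
  have ha : (7 + 4 * Real.sqrt 3) = Zsqrtd.toReal h3 (u3 : ℤ√3) := by
    simp [hu3, Zsqrtd.toReal_apply]
  have hb : (4 + Real.sqrt 15) = Zsqrtd.toReal h15 (u15 : ℤ√15) := by
    simp [hu15, Zsqrtd.toReal_apply]
  rw [ha, hb, key_zpow, key_zpow] at heq
  set v : ℤ√3 := ((u3 ^ M : (ℤ√3)ˣ) : ℤ√3) with hv
  set w : ℤ√15 := ((u15 ^ N : (ℤ√15)ˣ) : ℤ√15) with hw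
  set p := v.re with hp; set q := v.im with hq
  set r := w.re with hr; set s := w.im with hs
  have heq' : (p:ℝ) + q * √3 = r + s * √15 := by
    simpa [Zsqrtd.toReal_apply] using heq
  have s3 : √3 * √3 = 3 := Real.mul_self_sqrt (by norm_num)
  have s15 : √15 * √15 = 15 := Real.mul_self_sqrt (by norm_num)
  have s5 : √5 * √5 = 5 := Real.mul_self_sqrt (by norm_num)
  have irr3 : Irrational (√3) := by
    simpa using (Nat.Prime.irrational_sqrt (p := 3) (by norm_num))
  have irr5 : Irrational (√5) := by
    simpa using (Nat.Prime.irrational_sqrt (p := 5) (by norm_num))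
  have irr15 : Irrational (√15) := by
    have : ¬ IsSquare (15:ℕ) := by
      rintro ⟨k, hk⟩
      rcases Nat.lt_or_ge k 4 with h | h
      · interval_cases k <;> omega
      · nlinarith
    simpa using (irrational_sqrt_natCast_iff (n := 15)).mpr this
  -- squaring step
  have hsq : ((p:ℝ) - r)^2 + 2*((p:ℝ)-r)*q*√3 + 3*q^2 = 15*s^2 := by
    have h1 : ((p:ℝ) - r + q * √3)^2 = (s * √15)^2 := by
      rw [show (p:ℝ) - r + q * √3 = s * √15 by linarith]
    nlinarith [h1, s3, s15]
  have htq : ((p:ℤ) - r) * q = 0 := by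
    by_contra h
    have h2 : ((2*(((p:ℤ)-r)*q) : ℤ) : ℝ) * √3 = ((15*s^2 - (p-r)^2 - 3*q^2 : ℤ) : ℝ) := by
      push_cast
      nlinarith [hsq]
    have h2' : (2*(((p:ℤ)-r)*q)) ≠ 0 := mul_ne_zero two_ne_zero h
    exact (irr3.intCast_mul h2').ne_int _ h2
  have hq0s0 : q = 0 ∧ s = 0 := by
    rcases mul_eq_zero.mp htq with ht | hq'
    · -- p = r, so q√3 = s√15 = s√3√5
      have hpr : (p:ℝ) = (r:ℝ) := by exact_mod_cast (by omega : p = r)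
      have h315 : √15 = √3 * √5 := by
        rw [show (15:ℝ) = 3 * 5 by norm_num, Real.sqrt_mul (by norm_num)]
      have hq5 : (q:ℝ) * √3 = (s:ℝ) * √5 * √3 := by
        rw [mul_comm ((s:ℝ) * √5) (√3)]
        rw [h315] at heq'
        linarith [heq']
      have hqs : (q:ℝ) = (s:ℝ) * √5 :=
        mul_right_cancel₀ (Real.sqrt_ne_zero'.mpr (by norm_num)) hq5
      have hs0 : s = 0 := by
        by_contra hsne
        exact ((irr5.intCast_mul hsne).ne_int q) hqs.symm
      refine ⟨?_, hs0⟩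
      have : (q:ℝ) = 0 := by rw [hqs, hs0]; simp
      exact_mod_cast this
    · -- q = 0 : then (p - r : ℝ) = s√15
      refine ⟨hq', ?_⟩
      by_contra hsne
      have : ((s:ℤ):ℝ) * √15 = (((p - r : ℤ)):ℝ) := by
        push_cast
        rw [hq'] at heq'
        push_cast at heq'
        linarith
      exact ((irr15.intCast_mul hsne).ne_int _) this
  obtain ⟨hq0, hs0⟩ := hq0s0
  -- now v = ⟨p, 0⟩, a unit, so p = ±1 ; similarly for w
  have hvM : (7 + 4 * Real.sqrt 3) ^ M = (p:ℝ) := by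
    rw [ha, key_zpow, ← hv, Zsqrtd.toReal_apply, ← hp, ← hq, hq0]; push_cast; ring
  have hwN : (4 + Real.sqrt 15) ^ N = (r:ℝ) := by
    rw [hb, key_zpow, ← hw, Zsqrtd.toReal_apply, ← hr, ← hs, hs0]; push_cast; ring
  have hp1 : p = 1 ∨ p = -1 := unit_im_zero (u3 ^ M) hq0
  have hr1 : r = 1 ∨ r = -1 := unit_im_zero (u15 ^ N) hs0
  have hapos : (0:ℝ) < 7 + 4 * √3 := by positivity
  have hbpos : (0:ℝ) < 4 + √15 := by positivity
  have hp1' : p = 1 := by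
    rcases hp1 with h | h
    · exact h
    · exfalso
      have := zpow_pos hapos M
      rw [hvM, h] at this; norm_num at this
  have hr1' : r = 1 := by
    rcases hr1 with h | h
    · exact h
    · exfalso
      have := zpow_pos hbpos N
      rw [hwN, h] at this; norm_num at this
  have hM : M = 0 := by
    have h1 : (7 + 4 * Real.sqrt 3) ^ M = 1 := by rw [hvM, hp1']; norm_num
    have hane : (7 + 4 * √3 : ℝ) ≠ 1 := by
      have := Real.sqrt_nonneg 3; nlinarith [Real.sq_sqrt (show (0:ℝ) ≤ 3 by norm_num)]
    exact (zpow_eq_one_iff_right₀ hapos.le hane).mp h1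
  have hN : N = 0 := by
    have h1 : (4 + Real.sqrt 15) ^ N = 1 := by rw [hwN, hr1']; norm_num
    have hbne : (4 + √15 : ℝ) ≠ 1 := by
      have := Real.sqrt_nonneg 15; nlinarith
    exact (zpow_eq_one_iff_right₀ hbpos.le hbne).mp h1
  rcases hMN with h | h
  · exact h hM
  · exact h hN
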